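/- arXiv:1406.7860 — 2 statements merged into one kernel-verified Lean document; each statement's English description precedes it below -/
import Mathlib

section
/- With the notation of the 3-complete setup, let w ∈ W' and i ∈ {2, …, l}. Then d_i(w) ≠ 0, and d_i(w) > 0 if and only if ℓ(s_i w) < ℓ(w) (i.e., if and only if s_i is a left descent of w). -/
/-- `c_k(w)`: the `k`-th coordinate of `ρ(w)(α_{i0})`, where `α_{i0}` is the `i0`-th
standard basis vector. -/
noncomputable def coeffc {l : ℕ} {W : Type*} [Group W]
    (ρ : W →* Module.End ℝ (Fin l → ℝ)) (i0 : Fin l) (w : W) (k : Fin l) : ℝ :=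
  ρ w (Pi.single i0 1) k

/-- `d_i(w) = 2 c_i(w) - Σ_{k ≠ i} c_k(w)`. -/
noncomputable def coeffd {l : ℕ} {W : Type*} [Group W]
    (ρ : W →* Module.End ℝ (Fin l → ℝ)) (i0 : Fin l) (w : W) (i : Fin l) : ℝ :=
  2 * coeffc ρ i0 w i - ∑ k ∈ Finset.univ.erase i, coeffc ρ i0 w k

section ThreeComplete

variable {l : ℕ} {W : Type*} [Group W] {M : CoxeterMatrix (Fin l)} (cs : CoxeterSystem M W)
variable (ρ : W →* Module.End ℝ (Fin l → ℝ))

def HRho : Prop := ∀ i : Fin l,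
    (ρ (cs.simple i)) (Pi.single i (1 : ℝ)) = -Pi.single i 1 ∧
    ∀ j : Fin l, j ≠ i →
      (ρ (cs.simple i)) (Pi.single j (1 : ℝ)) = Pi.single i 1 + Pi.single j 1

variable {cs ρ}

theorem rho_apply (hρ : HRho cs ρ) (i : Fin l) (x : Fin l → ℝ) (m : Fin l) :
    (ρ (cs.simple i)) x m = if m = i then (∑ k, x k) - 2 * x i else x m := by
  have hx : x = ∑ k : Fin l, x k • (Pi.single k 1 : Fin l → ℝ) := by
    funext n
    rw [Finset.sum_apply]
    simp [Pi.single_apply, mul_ite]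
  conv_lhs => rw [hx, map_sum]
  rw [Finset.sum_apply]
  have hterm : ∀ k : Fin l, ((ρ (cs.simple i)) (x k • (Pi.single k 1 : Fin l → ℝ))) m
      = x k * ((ρ (cs.simple i)) (Pi.single k 1)) m := by
    intro k; rw [map_smul]; rfl
  simp only [hterm]
  rw [← Finset.add_sum_erase _ _ (Finset.mem_univ i)]
  have h1 : ((ρ (cs.simple i)) (Pi.single i (1:ℝ))) m = -(Pi.single i 1 : Fin l → ℝ) m := by
    rw [(hρ i).1]; simp
  have h2 : ∀ k ∈ Finset.univ.erase i, x k * ((ρ (cs.simple i)) (Pi.single k (1:ℝ))) m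
      = x k * ((Pi.single i 1 : Fin l → ℝ) m + (Pi.single k 1 : Fin l → ℝ) m) := by
    intro k hk
    rw [(hρ i).2 k (Finset.mem_erase.mp hk).1]
    rfl
  rw [Finset.sum_congr rfl h2, h1]
  by_cases hm : m = i
  · subst hm
    have h3 : ∀ k ∈ Finset.univ.erase m, x k * ((Pi.single m 1 : Fin l → ℝ) m + (Pi.single k 1 : Fin l → ℝ) m) = x k := by
      intro k hk
      rw [Pi.single_eq_same, Pi.single_eq_of_ne]
      · ring
      · exact Ne.symm (Finset.mem_erase.mp hk).1
    rw [Finset.sum_congr rfl h3, Finset.sum_erase_eq_sub (Finset.mem_univ m)]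
    rw [if_pos rfl, Pi.single_eq_same]
    ring
  · have h3 : ∀ k ∈ Finset.univ.erase i, x k * ((Pi.single i 1 : Fin l → ℝ) m + (Pi.single k 1 : Fin l → ℝ) m) = if m = k then x k else 0 := by
      intro k hk
      rw [Pi.single_eq_of_ne hm, Pi.single_apply]
      by_cases h : m = k <;> simp [h]
    rw [Finset.sum_congr rfl h3, Finset.sum_ite_eq (Finset.univ.erase i) m x]
    rw [Pi.single_eq_of_ne hm]
    simp [Finset.mem_erase, hm]

/-- `B(x,y) = 3⟨x,y⟩ - S(x)S(y)`, twice the standard Coxeter bilinear form (scaled). -/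
def Bf {l : ℕ} (x y : Fin l → ℝ) : ℝ :=
  3 * (∑ k, x k * y k) - (∑ k, x k) * (∑ k, y k)

theorem sum_ite_single {l : ℕ} (i : Fin l) (A : ℝ) (x : Fin l → ℝ) :
    ∑ m, (if m = i then A else x m) = A + (∑ k, x k) - x i := by
  rw [← Finset.add_sum_erase _ _ (Finset.mem_univ i), if_pos rfl,
    Finset.sum_congr rfl (fun k hk => if_neg (Finset.mem_erase.mp hk).1),
    Finset.sum_erase_eq_sub (Finset.mem_univ i)]
  ring

theorem Bf_rho_simple (hρ : HRho cs ρ) (i : Fin l) (x y : Fin l → ℝ) :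
    Bf ((ρ (cs.simple i)) x) ((ρ (cs.simple i)) y) = Bf x y := by
  have hx : ∀ m, (ρ (cs.simple i)) x m = if m = i then (∑ k, x k) - 2 * x i else x m :=
    rho_apply hρ i x
  have hy : ∀ m, (ρ (cs.simple i)) y m = if m = i then (∑ k, y k) - 2 * y i else y m :=
    rho_apply hρ i y
  unfold Bf
  have hprod : ∑ m, (ρ (cs.simple i)) x m * (ρ (cs.simple i)) y m
      = ∑ m, (if m = i then ((∑ k, x k) - 2 * x i) * ((∑ k, y k) - 2 * y i)
          else x m * y m) := by
    apply Finset.sum_congr rfl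
    intro m _
    rw [hx m, hy m]
    by_cases h : m = i <;> simp [h]
  rw [hprod, sum_ite_single,
    Finset.sum_congr rfl (fun m _ => hx m), sum_ite_single,
    Finset.sum_congr rfl (fun m _ => hy m), sum_ite_single]
  ring

theorem Bf_rho (hρ : HRho cs ρ) (w : W) (x y : Fin l → ℝ) :
    Bf ((ρ w) x) ((ρ w) y) = Bf x y := by
  revert x y
  induction w using cs.simple_induction with
  | simple i => exact Bf_rho_simple hρ i
  | one => simp
  | mul w₁ w₂ h₁ h₂ =>
    intro x y
    rw [map_mul]
    calc Bf ((ρ w₁ * ρ w₂) x) ((ρ w₁ * ρ w₂) y)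
        = Bf ((ρ w₁) ((ρ w₂) x)) ((ρ w₁) ((ρ w₂) y)) := rfl
      _ = Bf ((ρ w₂) x) ((ρ w₂) y) := h₁ _ _
      _ = Bf x y := h₂ _ _

theorem coord_fixed (hρ : HRho cs ρ) (i0 : Fin l) {w : W}
    (hw : w ∈ Subgroup.closure {x : W | ∃ i : Fin l, i ≠ i0 ∧ x = cs.simple i}) :
    ∀ x : Fin l → ℝ, (ρ w) x i0 = x i0 := by
  induction hw using Subgroup.closure_induction with
  | mem g hg =>
    obtain ⟨i, hi, rfl⟩ := hg
    intro x
    rw [rho_apply hρ i x i0, if_neg (by exact fun h => hi h.symm)]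
  | one => intro x; simp
  | mul g g' hg hg' ihg ihg' =>
    intro x
    rw [map_mul]
    calc (ρ g * ρ g') x i0 = (ρ g) ((ρ g') x) i0 := rfl
      _ = ((ρ g') x) i0 := ihg _
      _ = x i0 := ihg' _
  | inv g hg ihg =>
    intro x
    have h := ihg ((ρ g⁻¹) x)
    have h2 : (ρ g) ((ρ g⁻¹) x) = x := by
      rw [← Module.End.mul_apply, ← map_mul, mul_inv_cancel, map_one, Module.End.one_apply]
    rw [h2] at h
    exact h.symm

theorem single_coord (hρ : HRho cs ρ) (k i : Fin l) :
    (ρ (cs.simple k)) (Pi.single i 1) i = if i = k then -1 else 1 := by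
  rw [rho_apply hρ k]
  have hS : (∑ m, (Pi.single i 1 : Fin l → ℝ) m) = 1 := by
    simp [Pi.single_apply]
  by_cases h : i = k
  · subst h; simp [hS]; norm_num
  · simp [h]

theorem simple_ne (hρ : HRho cs ρ) {i j : Fin l} (hij : i ≠ j) :
    cs.simple i ≠ cs.simple j := by
  intro h
  have := congrArg (fun w => (ρ w) (Pi.single i 1) i) h
  simp only [single_coord hρ, if_pos rfl, if_neg hij] at this
  norm_num at this

theorem rho_aba (hρ : HRho cs ρ) {i j : Fin l} (hij : i ≠ j) :
    (ρ (cs.simple i * cs.simple j * cs.simple i)) (Pi.single i 1) = -Pi.single j 1 := by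
  rw [map_mul, map_mul, Module.End.mul_apply, Module.End.mul_apply, (hρ i).1, map_neg,
    (hρ j).2 i hij, map_neg, map_add, (hρ i).2 j (Ne.symm hij), (hρ i).1]
  abel

theorem aba_ne_simple (hρ : HRho cs ρ) {i j : Fin l} (hij : i ≠ j) (k : Fin l) :
    cs.simple i * cs.simple j * cs.simple i ≠ cs.simple k := by
  intro h
  have := congrArg (fun w => (ρ w) (Pi.single i 1) i) h
  simp only [rho_aba hρ hij, single_coord hρ] at this
  rw [Pi.neg_apply, Pi.single_eq_of_ne hij] at this
  by_cases h : i = k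
  · rw [if_pos h] at this; norm_num at this
  · rw [if_neg h] at this; norm_num at this

theorem mem_dihedral {G : Type*} [Group G] {a b : G} (ha : a * a = 1) (hb : b * b = 1)
    (hr : a * b * a = b * a * b) {v : G} (hv : v ∈ Subgroup.closure ({a, b} : Set G)) :
    v = 1 ∨ v = a ∨ v = b ∨ v = a * b ∨ v = b * a ∨ v = a * b * a := by
  have key_a : ∀ y : G,
      (y = 1 ∨ y = a ∨ y = b ∨ y = a * b ∨ y = b * a ∨ y = a * b * a) →
      (a * y = 1 ∨ a * y = a ∨ a * y = b ∨ a * y = a * b ∨ a * y = b * a ∨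
        a * y = a * b * a) := by
    rintro y (rfl | rfl | rfl | rfl | rfl | rfl)
    · right; left; exact mul_one _
    · left; exact ha
    · right; right; right; left; rfl
    · right; right; left; rw [← mul_assoc, ha, one_mul]
    · right; right; right; right; right; exact (mul_assoc a b a).symm
    · right; right; right; right; left
      have h1 : a * (a * b * a) = a * a * (b * a) := by group
      rw [h1, ha, one_mul]
  have key_b : ∀ y : G,
      (y = 1 ∨ y = a ∨ y = b ∨ y = a * b ∨ y = b * a ∨ y = a * b * a) →
      (b * y = 1 ∨ b * y = a ∨ b * y = b ∨ b * y = a * b ∨ b * y = b * a ∨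
        b * y = a * b * a) := by
    rintro y (rfl | rfl | rfl | rfl | rfl | rfl)
    · right; right; left; exact mul_one _
    · right; right; right; right; left; rfl
    · left; exact hb
    · right; right; right; right; right; rw [← mul_assoc]; exact hr.symm
    · right; left; rw [← mul_assoc, hb, one_mul]
    · right; right; right; left
      have h1 : b * (a * b * a) = b * a * b * a := by group
      have h2 : a * b * a * a = a * b * (a * a) := by group
      rw [h1, ← hr, h2, ha, mul_one]
  have hainv : a⁻¹ = a := inv_eq_of_mul_eq_one_right ha
  have hbinv : b⁻¹ = b := inv_eq_of_mul_eq_one_right hb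
  induction hv using Subgroup.closure_induction_left with
  | one => left; rfl
  | mul_left x hx y hy ih =>
    have hx' : x = a ∨ x = b := by simpa using hx
    rcases hx' with h | h <;> rw [h]
    · exact key_a y ih
    · exact key_b y ih
  | inv_mul_cancel x hx y hy ih =>
    have hx' : x = a ∨ x = b := by simpa using hx
    rcases hx' with h | h <;> rw [h]
    · rw [hainv]; exact key_a y ih
    · rw [hbinv]; exact key_b y ih

theorem braid' {G : Type*} [Group G] {a b : G} (ha : a * a = 1) (hb : b * b = 1)
    (h3 : (a * b) ^ 3 = 1) : a * b * a = b * a * b := by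
  have e2 : (a * b * a) * (b * a * b) = 1 := by
    have h : a * b * a * (b * a * b) = (a * b) ^ 3 := by
      rw [pow_succ, pow_succ, pow_one]; group
    rw [h, h3]
  have e3 : (b * a * b) * (b * a * b) = 1 := by
    have h : (b * a * b) * (b * a * b) = b * a * (b * b) * a * b := by group
    rw [h, hb]
    have h' : b * a * 1 * a * b = b * (a * a) * b := by group
    rw [h', ha]
    have h'' : b * 1 * b = b * b := by group
    rw [h'', hb]
  exact mul_right_cancel (e2.trans e3.symm)

theorem braid (hM : ∀ i j : Fin l, M.M i j = if i = j then 1 else 3)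
    {i j : Fin l} (hij : i ≠ j) :
    cs.simple i * cs.simple j * cs.simple i
      = cs.simple j * cs.simple i * cs.simple j := by
  apply braid' (cs.simple_mul_simple_self i) (cs.simple_mul_simple_self j)
  have h := cs.simple_mul_simple_pow i j
  rwa [show M i j = 3 by rw [hM i j, if_neg hij]] at h

theorem posT (hρ : HRho cs ρ) (hM : ∀ i j : Fin l, M.M i j = if i = j then 1 else 3) :
    ∀ n : ℕ, ∀ w : W, cs.length w = n → ∀ i : Fin l,
      cs.length w < cs.length (w * cs.simple i) →
      ∀ m : Fin l, 0 ≤ (ρ w) (Pi.single i 1) m := by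
  intro n
  induction n using Nat.strong_induction_on with
  | _ n ih =>
  intro w hwn i hlen m
  by_cases hw1 : w = 1
  · subst hw1
    rw [map_one, Module.End.one_apply, Pi.single_apply]
    split <;> norm_num
  · obtain ⟨j, hj⟩ := cs.exists_rightDescent_of_ne_one hw1
    have hjlt : cs.length (w * cs.simple j) < cs.length w := hj
    have hij : i ≠ j := by rintro rfl; omega
    have hσne : cs.simple i ≠ cs.simple j := simple_ne hρ hij
    classical
    set Q : ℕ → Prop := fun q => ∃ u v : W, cs.length u = q ∧
      v ∈ Subgroup.closure ({cs.simple i, cs.simple j} : Set W) ∧ w = u * v ∧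
      cs.length u + cs.length v = cs.length w with hQdef
    have hex : ∃ q, Q q := ⟨cs.length w, w, 1, rfl, one_mem _, (mul_one w).symm, by simp⟩
    obtain ⟨u, v, hu_len, hv_mem, huv, hadd⟩ := Nat.find_spec hex
    have hmin : ∀ q, q < Nat.find hex → ¬ Q q := fun q hq => Nat.find_min hex hq
    have hkey : ∀ k : Fin l, k = i ∨ k = j →
        cs.length u < cs.length (u * cs.simple k) := by
      intro k hk
      by_contra hcon
      have hne := cs.length_mul_simple_ne u k
      have hlt : cs.length (u * cs.simple k) < cs.length u :=
        lt_of_le_of_ne (not_lt.mp hcon) hne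
      apply hmin (cs.length (u * cs.simple k)) (hu_len ▸ hlt)
      refine ⟨u * cs.simple k, cs.simple k * v, rfl, ?_, ?_, ?_⟩
      · refine mul_mem (Subgroup.subset_closure ?_) hv_mem
        rcases hk with rfl | rfl <;> simp
      · rw [huv, mul_assoc, cs.simple_mul_simple_cancel_left]
      · have heq : u * cs.simple k * (cs.simple k * v) = w := by
          rw [huv, mul_assoc, cs.simple_mul_simple_cancel_left]
        have h1 : cs.length w ≤ cs.length (u * cs.simple k) + cs.length (cs.simple k * v) := by
          conv_lhs => rw [← heq]
          exact cs.length_mul_le _ _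
        have h2 : cs.length (cs.simple k * v) ≤ 1 + cs.length v := by
          have := cs.length_mul_le (cs.simple k) v
          rwa [cs.length_simple] at this
        have h3 : cs.length (u * cs.simple k) + 1 = cs.length u :=
          (cs.isRightDescent_iff).mp hlt
        omega
    have hua := hkey i (Or.inl rfl)
    have hub := hkey j (Or.inr rfl)
    have hv_ne : v ≠ 1 := by
      rintro rfl
      rw [mul_one] at huv
      rw [← huv] at hub
      omega
    have hvpos : 1 ≤ cs.length v := by
      rcases Nat.eq_zero_or_pos (cs.length v) with h | h
      · exact absurd (cs.length_eq_zero_iff.mp h) hv_ne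
      · exact h
    have hva : cs.length (v * cs.simple i) = cs.length v + 1 := by
      have hwa : cs.length (w * cs.simple i) = cs.length w + 1 := by
        have := cs.length_mul_simple w i
        omega
      have h1 : cs.length (w * cs.simple i)
          ≤ cs.length u + cs.length (v * cs.simple i) := by
        rw [huv, mul_assoc]
        exact cs.length_mul_le _ _
      have h2 : cs.length (v * cs.simple i) ≤ cs.length v + 1 := by
        have := cs.length_mul_le v (cs.simple i)
        rwa [cs.length_simple] at this
      omega
    have h6 := mem_dihedral (cs.simple_mul_simple_self i) (cs.simple_mul_simple_self j)
      (braid hM hij) hv_mem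
    have hulen_lt : cs.length u < n := by omega
    have posui : ∀ m : Fin l, 0 ≤ (ρ u) (Pi.single i 1) m :=
      ih (cs.length u) (by omega) u rfl i hua
    have posuj : ∀ m : Fin l, 0 ≤ (ρ u) (Pi.single j 1) m :=
      ih (cs.length u) (by omega) u rfl j hub
    rcases h6 with rfl | rfl | rfl | rfl | rfl | rfl
    · exact absurd rfl hv_ne
    · -- v = s i : impossible
      rw [cs.simple_mul_simple_self, cs.length_one, cs.length_simple] at hva
      omega
    · -- v = s j
      rw [huv, map_mul, Module.End.mul_apply, (hρ j).2 i hij, map_add, Pi.add_apply]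
      exact add_nonneg (posuj m) (posui m)
    · -- v = s i * s j
      have hcomp : (ρ (cs.simple i * cs.simple j)) (Pi.single i 1) = Pi.single j 1 := by
        rw [map_mul, Module.End.mul_apply, (hρ j).2 i hij, map_add, (hρ i).2 j (Ne.symm hij),
          (hρ i).1]
        abel
      rw [huv, map_mul, Module.End.mul_apply, hcomp]
      exact posuj m
    · -- v = s j * s i : impossible
      rw [cs.simple_mul_simple_cancel_right, cs.length_simple] at hva
      have h0 : cs.length (cs.simple j * cs.simple i) = 0 := by omega
      have h1 : cs.simple j * cs.simple i = 1 := cs.length_eq_zero_iff.mp h0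
      have : cs.simple j = cs.simple i := by
        calc cs.simple j = cs.simple j * cs.simple i * cs.simple i := by
              rw [cs.simple_mul_simple_cancel_right]
          _ = cs.simple i := by rw [h1, one_mul]
      exact absurd this.symm hσne
    · -- v = s i * s j * s i : impossible
      rw [cs.simple_mul_simple_cancel_right] at hva
      have hab : cs.length (cs.simple i * cs.simple j) = 2 := by
        have h01 := cs.length_mul_simple (cs.simple i) j
        rw [cs.length_simple] at h01
        rcases h01 with h | h
        · exact h
        · exfalso
          have h0 : cs.length (cs.simple i * cs.simple j) = 0 := by omega
          have h1 : cs.simple i * cs.simple j = 1 := cs.length_eq_zero_iff.mp h0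
          have : cs.simple i = cs.simple j := by
            calc cs.simple i = cs.simple i * cs.simple j * cs.simple j := by
                  rw [cs.simple_mul_simple_cancel_right]
              _ = cs.simple j := by rw [h1, one_mul]
          exact hσne this
      have haba : cs.length (cs.simple i * cs.simple j * cs.simple i) = 1 := by omega
      obtain ⟨k, hk⟩ := cs.length_eq_one_iff.mp haba
      exact absurd hk (aba_ne_simple hρ hij k)

theorem Bf_comm {l : ℕ} (x y : Fin l → ℝ) : Bf x y = Bf y x := by
  unfold Bf
  rw [Finset.sum_congr rfl (fun k _ => mul_comm (x k) (y k))]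
  ring

theorem Bf_single_left {l : ℕ} (i : Fin l) (y : Fin l → ℝ) :
    Bf (Pi.single i 1) y = 3 * y i - ∑ k, y k := by
  unfold Bf
  have h1 : ∑ k, (Pi.single i 1 : Fin l → ℝ) k * y k = y i := by
    rw [Finset.sum_congr rfl (fun k _ => by rw [Pi.single_apply, ite_mul, one_mul, zero_mul])]
    simp
  have h2 : ∑ k, (Pi.single i 1 : Fin l → ℝ) k = 1 := by simp [Pi.single_apply]
  rw [h1, h2]
  ring

theorem coeffd_eq_Bf (i0 : Fin l) (w : W) (i : Fin l) :
    coeffd ρ i0 w i = Bf (Pi.single i 1) ((ρ w) (Pi.single i0 1)) := by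
  rw [Bf_single_left]
  unfold coeffd coeffc
  rw [Finset.sum_erase_eq_sub (Finset.mem_univ i)]
  ring

theorem rho_inv_apply (w : W) (x : Fin l → ℝ) : (ρ w⁻¹) ((ρ w) x) = x := by
  rw [← Module.End.mul_apply, ← map_mul, inv_mul_cancel, map_one, Module.End.one_apply]

theorem coeffd_eq_neg_sum (hρ : HRho cs ρ) (i0 : Fin l) {w : W}
    (hw : w ∈ Subgroup.closure {x : W | ∃ i : Fin l, i ≠ i0 ∧ x = cs.simple i})
    {i : Fin l} (hi : i ≠ i0) :
    coeffd ρ i0 w i = - ∑ k, (ρ w⁻¹) (Pi.single i 1) k := by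
  rw [coeffd_eq_Bf]
  have hinv : Bf (Pi.single i 1) ((ρ w) (Pi.single i0 1))
      = Bf ((ρ w⁻¹) (Pi.single i 1)) (Pi.single i0 1) := by
    calc Bf (Pi.single i 1) ((ρ w) (Pi.single i0 1))
        = Bf ((ρ w⁻¹) (Pi.single i 1)) ((ρ w⁻¹) ((ρ w) (Pi.single i0 1))) :=
          (Bf_rho hρ w⁻¹ _ _).symm
      _ = Bf ((ρ w⁻¹) (Pi.single i 1)) (Pi.single i0 1) := by rw [rho_inv_apply]
  rw [hinv, Bf_comm, Bf_single_left]
  have h0 : (ρ w⁻¹) (Pi.single i 1) i0 = 0 := by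
    rw [coord_fixed hρ i0 (inv_mem hw) (Pi.single i 1), Pi.single_eq_of_ne (Ne.symm hi)]
  rw [h0]
  ring

theorem coeffd_neg_of_not_descent (hρ : HRho cs ρ)
    (hM : ∀ i j : Fin l, M.M i j = if i = j then 1 else 3) (i0 : Fin l) {w : W}
    (hw : w ∈ Subgroup.closure {x : W | ∃ i : Fin l, i ≠ i0 ∧ x = cs.simple i})
    {i : Fin l} (hi : i ≠ i0)
    (hnd : cs.length w < cs.length (cs.simple i * w)) :
    coeffd ρ i0 w i < 0 := by
  rw [coeffd_eq_neg_sum hρ i0 hw hi]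
  rw [neg_lt, neg_zero]
  have hlen : cs.length w⁻¹ < cs.length (w⁻¹ * cs.simple i) := by
    have h1 : (w⁻¹ * cs.simple i)⁻¹ = cs.simple i * w := by
      rw [mul_inv_rev, inv_inv, cs.inv_simple]
    have h2 : cs.length (w⁻¹ * cs.simple i) = cs.length (cs.simple i * w) := by
      rw [← cs.length_inv, h1]
    rw [h2, cs.length_inv]
    exact hnd
  have hpos : ∀ m : Fin l, 0 ≤ (ρ w⁻¹) (Pi.single i 1) m :=
    posT hρ hM (cs.length w⁻¹) w⁻¹ rfl i hlen
  have hne : (ρ w⁻¹) (Pi.single i 1) ≠ 0 := by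
    intro h
    have h1 : (ρ w) ((ρ w⁻¹) (Pi.single i 1)) = Pi.single i 1 := by
      rw [← Module.End.mul_apply, ← map_mul, mul_inv_cancel, map_one, Module.End.one_apply]
    rw [h, map_zero] at h1
    have := congrFun h1 i
    rw [Pi.zero_apply, Pi.single_eq_same] at this
    norm_num at this
  have hex : ∃ m : Fin l, (ρ w⁻¹) (Pi.single i 1) m ≠ 0 := by
    by_contra h
    push_neg at h
    exact hne (funext h)
  obtain ⟨m, hm⟩ := hex
  exact Finset.sum_pos' (fun k _ => hpos k)
    ⟨m, Finset.mem_univ m, lt_of_le_of_ne (hpos m) (Ne.symm hm)⟩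

end ThreeComplete

theorem coeffd_ne_zero_and_pos_iff_leftDescent (l : ℕ) (hl : 2 ≤ l)
    (M : CoxeterMatrix (Fin l))
    (hM : ∀ i j : Fin l, M.M i j = if i = j then 1 else 3)
    (W : Type*) [Group W] (cs : CoxeterSystem M W)
    (ρ : W →* Module.End ℝ (Fin l → ℝ))
    (hρ : ∀ i : Fin l,
      (ρ (cs.simple i)) (Pi.single i (1 : ℝ)) = -Pi.single i 1 ∧
      ∀ j : Fin l, j ≠ i →
        (ρ (cs.simple i)) (Pi.single j (1 : ℝ)) = Pi.single i 1 + Pi.single j 1)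
    (i0 : Fin l) (hi0 : (i0 : ℕ) = 0)
    (w : W) (hw : w ∈ Subgroup.closure {x : W | ∃ i : Fin l, i ≠ i0 ∧ x = cs.simple i})
    (i : Fin l) (hi : i ≠ i0) :
    coeffd ρ i0 w i ≠ 0 ∧
      (0 < coeffd ρ i0 w i ↔ cs.length (cs.simple i * w) < cs.length w) := by
  have hρ' : HRho cs ρ := hρ
  rcases cs.length_simple_mul w i with hcase | hcase
  · -- s i is not a left descent of w
    have hnd : cs.length w < cs.length (cs.simple i * w) := by omega
    have hneg : coeffd ρ i0 w i < 0 := coeffd_neg_of_not_descent hρ' hM i0 hw hi hnd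
    exact ⟨ne_of_lt hneg, by constructor <;> intro h <;> [linarith; omega]⟩
  · -- s i is a left descent of w
    have hw' : cs.simple i * w ∈
        Subgroup.closure {x : W | ∃ i : Fin l, i ≠ i0 ∧ x = cs.simple i} :=
      mul_mem (Subgroup.subset_closure ⟨i, hi, rfl⟩) hw
    have hnd' : cs.length (cs.simple i * w)
        < cs.length (cs.simple i * (cs.simple i * w)) := by
      rw [cs.simple_mul_simple_cancel_left]; omega
    have hneg' : coeffd ρ i0 (cs.simple i * w) i < 0 :=
      coeffd_neg_of_not_descent hρ' hM i0 hw' hi hnd'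
    have hrel : coeffd ρ i0 w i = - coeffd ρ i0 (cs.simple i * w) i := by
      rw [coeffd_eq_neg_sum hρ' i0 hw hi, coeffd_eq_neg_sum hρ' i0 hw' hi, neg_neg]
      have h1 : w⁻¹ = (cs.simple i * w)⁻¹ * cs.simple i := by
        rw [mul_inv_rev, cs.inv_simple, mul_assoc, cs.simple_mul_simple_self, mul_one]
      have hβ : (ρ w⁻¹) (Pi.single i 1)
          = - (ρ (cs.simple i * w)⁻¹) (Pi.single i 1) := by
        rw [h1, map_mul, Module.End.mul_apply, (hρ i).1, map_neg]
      rw [hβ]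
      simp
    refine ⟨?_, ?_⟩
    · rw [hrel]; exact ne_of_gt (by linarith)
    · exact ⟨fun _ => by omega, fun _ => by rw [hrel]; linarith⟩
end

section
/- Let n ∈ ℕ, j ∈ [f_{n+1}], and write P_{n,j} = Σ_M a_M M, the sum over all words M in a, b (with a_M ∈ ℚ and only finitely many a_M nonzero). Then a_M = 0 unless the length of M is at most n and congruent to n modulo 2; moreover, if M has length n − 2i for some i ≥ 0, then (−1)^i a_M ≥ 0. -/
/-- The free associative `ℚ`-algebra on the two noncommuting generators `a`, `b`. -/
abbrev FreeA := FreeAlgebra ℚ Bool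

/-- The generator `a`. -/
noncomputable def gena : FreeA := FreeAlgebra.ι ℚ false

/-- The generator `b`. -/
noncomputable def genb : FreeA := FreeAlgebra.ι ℚ true

/-- `c = a + b`. -/
noncomputable def genc : FreeA := gena + genb

/-- `d = ab + ba`. -/
noncomputable def gend : FreeA := gena * genb + genb * gena

/-- The lists `A_n`: `A_0 = (1)`, `A_1 = (c)`, and `A_n` is the list
`(cP + G'(P) : P ∈ A_{n-1})` followed by the list `((d-1)P : P ∈ A_{n-2})`.
Its entries are `P_{n,1}, …, P_{n,f_{n+1}}`. -/
noncomputable def Plist (G' : FreeA →ₗ[ℚ] FreeA) : ℕ → List FreeA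
  | 0 => [1]
  | 1 => [genc]
  | n + 2 =>
      ((Plist G' (n + 1)).map fun P => genc * P + G' P) ++
        ((Plist G' n).map fun P => (gend - 1) * P)

/-- The identification of `FreeA` with the monoid algebra of the free monoid on two
letters, whose underlying `ℚ`-basis is the set of words in `a`, `b`. -/
noncomputable def wordEquiv : FreeA ≃ₐ[ℚ] MonoidAlgebra ℚ (FreeMonoid Bool) :=
  FreeAlgebra.equivMonoidAlgebraFreeMonoid

/-- The coordinates of an element of `FreeA` with respect to the basis of words in `a`, `b`. -/
noncomputable def toCoeffs (x : FreeA) : FreeMonoid Bool →₀ ℚ :=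
  (wordEquiv x).coeff

/-- `π_n`: the `ℚ`-linear projection of `FreeA` keeping exactly the terms supported on
words of length `n` (the homogeneous component of degree `n`). -/
noncomputable def pin (n : ℕ) (x : FreeA) : FreeA :=
  wordEquiv.symm (MonoidAlgebra.ofCoeff ((toCoeffs x).filter (fun m : FreeMonoid Bool => m.length = n)))
section Aux

/-- All coefficients nonnegative. -/
def Nng (x : FreeA) : Prop := ∀ M, 0 ≤ toCoeffs x M

/-- Homogeneous of degree `k` (supported on words of length `k`). -/
def Homog (k : ℕ) (x : FreeA) : Prop :=
  ∀ M : FreeMonoid Bool, toCoeffs x M ≠ 0 → M.length = k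

/-- Nonnegative and homogeneous of degree `k`. -/
def NH (k : ℕ) (x : FreeA) : Prop := Nng x ∧ Homog k x

lemma NH_mul {j k x y} (hx : NH j x) (hy : NH k y) : NH (j + k) (x * y) := by
  classical
  constructor
  · intro M
    show 0 ≤ (wordEquiv (x * y)).coeff M
    rw [map_mul, MonoidAlgebra.coeff_mul, Finsupp.sum]
    refine Finset.sum_nonneg fun a₁ _ => ?_
    rw [Finsupp.sum]
    refine Finset.sum_nonneg fun a₂ _ => ?_
    split
    · exact mul_nonneg (hx.1 a₁) (hy.1 a₂)
    · exact le_refl 0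
  · intro M hM
    replace hM : (wordEquiv (x * y)).coeff M ≠ 0 := hM
    rw [map_mul, MonoidAlgebra.coeff_mul, Finsupp.sum] at hM
    obtain ⟨a₁, -, h₁⟩ := Finset.exists_ne_zero_of_sum_ne_zero hM
    rw [Finsupp.sum] at h₁
    obtain ⟨a₂, -, h₂⟩ := Finset.exists_ne_zero_of_sum_ne_zero h₁
    split at h₂
    · rename_i heq
      have hb₁ : toCoeffs x a₁ ≠ 0 := left_ne_zero_of_mul h₂
      have hb₂ : toCoeffs y a₂ ≠ 0 := right_ne_zero_of_mul h₂
      rw [← heq, FreeMonoid.length_mul, hx.2 a₁ hb₁, hy.2 a₂ hb₂]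
    · exact absurd rfl h₂

lemma toCoeffs_add (x y : FreeA) (M : FreeMonoid Bool) :
    toCoeffs (x + y) M = toCoeffs x M + toCoeffs y M := by
  show (wordEquiv (x + y)).coeff M = _
  rw [map_add]; rfl

lemma toCoeffs_smul (r : ℚ) (x : FreeA) (M : FreeMonoid Bool) :
    toCoeffs (r • x) M = r * toCoeffs x M := by
  show (wordEquiv (r • x)).coeff M = _
  rw [map_smul]; rfl

lemma toCoeffs_zero (M : FreeMonoid Bool) : toCoeffs 0 M = 0 := by
  show (wordEquiv 0).coeff M = 0
  rw [map_zero]; rfl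

lemma NH_zero (k : ℕ) : NH k 0 := by
  refine ⟨fun M => ?_, fun M hM => ?_⟩
  · rw [toCoeffs_zero]
  · exact absurd (toCoeffs_zero M) hM

lemma NH_add {k x y} (hx : NH k x) (hy : NH k y) : NH k (x + y) := by
  constructor
  · intro M; rw [toCoeffs_add]; exact add_nonneg (hx.1 M) (hy.1 M)
  · intro M hM
    rw [toCoeffs_add] at hM
    by_cases h1 : toCoeffs x M = 0
    · by_cases h2 : toCoeffs y M = 0
      · simp [h1, h2] at hM
      · exact hy.2 M h2
    · exact hx.2 M h1

lemma NH_smul {k x} {r : ℚ} (hr : 0 ≤ r) (hx : NH k x) : NH k (r • x) := by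
  constructor
  · intro M; rw [toCoeffs_smul]; exact mul_nonneg hr (hx.1 M)
  · intro M hM
    rw [toCoeffs_smul] at hM
    exact hx.2 M (right_ne_zero_of_mul hM)

lemma NH_sum {k : ℕ} {ι : Type*} (s : Finset ι) (f : ι → FreeA)
    (h : ∀ i ∈ s, NH k (f i)) : NH k (∑ i ∈ s, f i) := by
  classical
  induction s using Finset.induction_on with
  | empty => simpa using NH_zero k
  | insert a s hni ih =>
    rw [Finset.sum_insert hni]
    exact NH_add (h a (Finset.mem_insert_self a s))
      (ih fun i hi => h i (Finset.mem_insert_of_mem hi))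

lemma toCoeffs_gena : toCoeffs gena = Finsupp.single (FreeMonoid.of false) 1 := by
  simp [toCoeffs, wordEquiv, gena, FreeAlgebra.equivMonoidAlgebraFreeMonoid]

lemma toCoeffs_genb : toCoeffs genb = Finsupp.single (FreeMonoid.of true) 1 := by
  simp [toCoeffs, wordEquiv, genb, FreeAlgebra.equivMonoidAlgebraFreeMonoid]

lemma toCoeffs_one : toCoeffs 1 = Finsupp.single 1 1 := by
  simp [toCoeffs, MonoidAlgebra.one_def]

lemma NH_single {k : ℕ} {x : FreeA} {w : FreeMonoid Bool}
    (hx : toCoeffs x = Finsupp.single w 1) (hw : w.length = k) : NH k x := by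
  classical
  constructor
  · intro M
    rw [hx]
    show (0:ℚ) ≤ Finsupp.single w 1 M
    rw [Finsupp.single_apply]
    split <;> norm_num
  · intro M hM
    rw [hx] at hM
    replace hM : Finsupp.single w (1:ℚ) M ≠ 0 := hM
    rw [Finsupp.single_apply] at hM
    split at hM
    · rename_i h; rw [← h, hw]
    · exact absurd rfl hM

lemma NH_gena : NH 1 gena := NH_single toCoeffs_gena rfl
lemma NH_genb : NH 1 genb := NH_single toCoeffs_genb rfl
lemma NH_one : NH 0 (1 : FreeA) := NH_single toCoeffs_one rfl
lemma NH_genc : NH 1 genc := NH_add NH_gena NH_genb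
lemma NH_gend : NH 2 gend :=
  NH_add (NH_mul NH_gena NH_genb) (NH_mul NH_genb NH_gena)

lemma eq_zero_of_coeffs (x : FreeA) (h : ∀ M, toCoeffs x M = 0) : x = 0 := by
  have : wordEquiv x = 0 := MonoidAlgebra.coeff_injective (Finsupp.ext h)
  have := congrArg wordEquiv.symm this
  simpa using this

/-- The basis word corresponding to `M`. -/
noncomputable def word (M : FreeMonoid Bool) : FreeA :=
  wordEquiv.symm (MonoidAlgebra.single M 1)

lemma toCoeffs_word (M : FreeMonoid Bool) : toCoeffs (word M) = Finsupp.single M 1 := by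
  simp [toCoeffs, word]

lemma word_one : word 1 = 1 := by
  have : (MonoidAlgebra.single (1 : FreeMonoid Bool) (1:ℚ)) = 1 := rfl
  rw [word, this, map_one]

lemma word_cons (m : Bool) (M : FreeMonoid Bool) :
    word (FreeMonoid.of m * M) = FreeAlgebra.ι ℚ m * word M := by
  have h : MonoidAlgebra.single (FreeMonoid.of m * M) (1:ℚ) =
      MonoidAlgebra.single (FreeMonoid.of m) 1 * MonoidAlgebra.single M 1 := by
    rw [MonoidAlgebra.single_mul_single, one_mul]
  rw [word, h, map_mul]
  congr 1
  apply wordEquiv.injective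
  rw [AlgEquiv.apply_symm_apply]
  cases m
  · exact (MonoidAlgebra.coeff_injective toCoeffs_gena).symm
  · exact (MonoidAlgebra.coeff_injective toCoeffs_genb).symm

lemma decompose (x : FreeA) :
    x = ∑ M ∈ (toCoeffs x).support, toCoeffs x M • word M := by
  apply wordEquiv.injective
  rw [map_sum]
  conv_lhs => rw [← MonoidAlgebra.sum_coeff_single (wordEquiv x)]
  rw [Finsupp.sum]
  refine Finset.sum_congr rfl fun M _ => ?_
  rw [map_smul, word, AlgEquiv.apply_symm_apply, MonoidAlgebra.smul_single', mul_one]; rfl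

end Aux
section Gsec

variable (G' : FreeA →ₗ[ℚ] FreeA)

lemma toCoeffs_sum {ι : Type*} (s : Finset ι) (f : ι → FreeA) (M : FreeMonoid Bool) :
    toCoeffs (∑ i ∈ s, f i) M = ∑ i ∈ s, toCoeffs (f i) M := by
  show (wordEquiv (∑ i ∈ s, f i)).coeff M = _
  rw [map_sum, MonoidAlgebra.coeff_sum]
  exact Finset.sum_apply' M

lemma G'_one (hLeib : ∀ x y : FreeA, G' (x * y) = G' x * y + x * G' y) : G' 1 = 0 := by
  have h := hLeib 1 1
  rw [one_mul, mul_one, one_mul] at h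
  exact (left_eq_add.mp h)

lemma NH_G'_word (hLeib : ∀ x y : FreeA, G' (x * y) = G' x * y + x * G' y)
    (ha : G' gena = gena * genb) (hb : G' genb = genb * gena)
    (M : FreeMonoid Bool) : NH (M.length + 1) (G' (word M)) := by
  induction M using FreeMonoid.recOn with
  | one =>
    rw [word_one, G'_one G' hLeib]
    exact NH_zero _
  | of_mul m M ihM =>
    rw [word_cons, hLeib]
    have hlen : (FreeMonoid.of m * M).length + 1 = 2 + M.length := by
      rw [FreeMonoid.length_mul, FreeMonoid.length_of]; omega
    rw [hlen]
    have hword : NH M.length (word M) := NH_single (toCoeffs_word M) rfl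
    refine NH_add ?_ ?_
    · cases m
      · show NH (2 + M.length) (G' gena * word M)
        rw [ha]
        exact NH_mul (NH_mul NH_gena NH_genb) hword
      · show NH (2 + M.length) (G' genb * word M)
        rw [hb]
        exact NH_mul (NH_mul NH_genb NH_gena) hword
    · have h2 : (2 + M.length) = 1 + (M.length + 1) := by omega
      rw [h2]
      cases m
      · exact NH_mul NH_gena ihM
      · exact NH_mul NH_genb ihM

lemma NH_G' (hLeib : ∀ x y : FreeA, G' (x * y) = G' x * y + x * G' y)
    (ha : G' gena = gena * genb) (hb : G' genb = genb * gena)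
    {k : ℕ} {y : FreeA} (hy : NH k y) : NH (k + 1) (G' y) := by
  have hdec := decompose y
  have : G' y = ∑ M ∈ (toCoeffs y).support, toCoeffs y M • G' (word M) := by
    conv_lhs => rw [hdec]
    rw [map_sum]
    exact Finset.sum_congr rfl fun M _ => map_smul G' _ _
  rw [this]
  refine NH_sum _ _ fun M hM => ?_
  have hne : toCoeffs y M ≠ 0 := Finsupp.mem_support_iff.mp hM
  have hlen : M.length = k := hy.2 M hne
  have := NH_smul (hy.1 M) (NH_G'_word G' hLeib ha hb M)
  rwa [hlen] at this

/-- `x` is zero or nonneg homogeneous of the degree `n - 2i`. -/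
def Ok (n i : ℕ) (x : FreeA) : Prop := x = 0 ∨ ∃ k, k + 2 * i = n ∧ NH k x

lemma Ok_zero (n i : ℕ) : Ok n i (0 : FreeA) := Or.inl rfl

lemma Ok_add {n i x y} (hx : Ok n i x) (hy : Ok n i y) : Ok n i (x + y) := by
  rcases hx with rfl | ⟨k, hk, hx⟩
  · rwa [zero_add]
  rcases hy with rfl | ⟨k', hk', hy⟩
  · rw [add_zero]; exact Or.inr ⟨k, hk, hx⟩
  have hkk : k' = k := by omega
  rw [hkk] at hy
  exact Or.inr ⟨k, hk, NH_add hx hy⟩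

lemma Ok_big {n i x} (h : Ok n i x) (hi : n < 2 * i) : x = 0 := by
  rcases h with rfl | ⟨k, hk, -⟩
  · rfl
  · omega

/-- Decomposition of `x` as an alternating sum of nonneg homogeneous pieces. -/
def GoodD (n : ℕ) (x : FreeA) : Prop :=
  ∃ g : ℕ → FreeA,
    x = ∑ i ∈ Finset.range (n + 1), ((-1 : ℚ) ^ i) • g i ∧ ∀ i, Ok n i (g i)

lemma GoodD_one : GoodD 0 (1 : FreeA) := by
  refine ⟨fun i => if i = 0 then 1 else 0, ?_, ?_⟩
  · simp
  · intro i
    by_cases h : i = 0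
    · subst h; exact (Or.inr ⟨0, rfl, NH_one⟩ : Ok 0 0 1)
    · simp only [h, if_false]; exact Ok_zero _ _
lemma GoodD_genc : GoodD 1 genc := by
  refine ⟨fun i => if i = 0 then genc else 0, ?_, ?_⟩
  · simp [Finset.sum_range_succ]
  · intro i
    by_cases h : i = 0
    · subst h; exact (Or.inr ⟨1, rfl, NH_genc⟩ : Ok 1 0 genc)
    · simp only [h, if_false]; exact Ok_zero _ _

lemma GoodD_step1 (hLeib : ∀ x y : FreeA, G' (x * y) = G' x * y + x * G' y)
    (ha : G' gena = gena * genb) (hb : G' genb = genb * gena)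
    {n : ℕ} {x : FreeA} (hx : GoodD n x) : GoodD (n + 1) (genc * x + G' x) := by
  obtain ⟨g, hsum, hok⟩ := hx
  refine ⟨fun i => genc * g i + G' (g i), ?_, ?_⟩
  · have hg : g (n + 1) = 0 := Ok_big (hok (n + 1)) (by omega)
    rw [Finset.sum_range_succ]
    simp only []
    rw [hg, mul_zero, map_zero, add_zero, smul_zero, add_zero]
    have h1 : genc * x = ∑ i ∈ Finset.range (n + 1), ((-1 : ℚ) ^ i) • (genc * g i) := by
      rw [hsum, Finset.mul_sum]
      exact Finset.sum_congr rfl fun i _ => (mul_smul_comm _ _ _)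
    have h2 : G' x = ∑ i ∈ Finset.range (n + 1), ((-1 : ℚ) ^ i) • (G' (g i)) := by
      rw [hsum, map_sum]
      exact Finset.sum_congr rfl fun i _ => map_smul G' _ _
    rw [h1, h2, ← Finset.sum_add_distrib]
    exact Finset.sum_congr rfl fun i _ => (smul_add _ _ _).symm
  · intro i
    refine Ok_add ?_ ?_
    · rcases hok i with h0 | ⟨k, hk, hNH⟩
      · rw [h0, mul_zero]; exact Ok_zero _ _
      · exact Or.inr ⟨1 + k, by omega, NH_mul NH_genc hNH⟩
    · rcases hok i with h0 | ⟨k, hk, hNH⟩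
      · rw [h0, map_zero]; exact Ok_zero _ _
      · exact Or.inr ⟨k + 1, by omega, NH_G' G' hLeib ha hb hNH⟩

lemma GoodD_step2 {n : ℕ} {x : FreeA} (hx : GoodD n x) :
    GoodD (n + 2) ((gend - 1) * x) := by
  obtain ⟨g, hsum, hok⟩ := hx
  have hg1 : g (n + 1) = 0 := Ok_big (hok (n + 1)) (by omega)
  have hg2 : g (n + 2) = 0 := Ok_big (hok (n + 2)) (by omega)
  refine ⟨fun i => match i with
    | 0 => gend * g 0
    | (i + 1) => gend * g (i + 1) + g i, ?_, ?_⟩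
  · have key1 : ∑ i ∈ Finset.range (n + 3), ((-1 : ℚ) ^ i) • (gend * g i) = gend * x := by
      have : ∑ i ∈ Finset.range (n + 3), ((-1 : ℚ) ^ i) • (gend * g i)
          = gend * ∑ i ∈ Finset.range (n + 3), ((-1 : ℚ) ^ i) • g i := by
        rw [Finset.mul_sum]
        exact Finset.sum_congr rfl fun i _ => (mul_smul_comm _ _ _).symm
      rw [this, Finset.sum_range_succ, Finset.sum_range_succ, hg1, hg2, smul_zero, smul_zero,
        add_zero, add_zero, hsum]
    have key2 : ∑ i ∈ Finset.range (n + 2), ((-1 : ℚ) ^ (i + 1)) • g i = -x := by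
      have : ∀ i, ((-1 : ℚ) ^ (i + 1)) • g i = -(((-1 : ℚ) ^ i) • g i) := by
        intro i; rw [pow_succ, mul_comm, neg_one_mul, neg_smul]
      simp only [this]
      rw [Finset.sum_neg_distrib]
      congr 1
      rw [Finset.sum_range_succ, hg1, smul_zero, add_zero, hsum]
    rw [Finset.sum_range_succ']
    simp only []
    have expand : ∀ i ∈ Finset.range (n + 2),
        ((-1 : ℚ) ^ (i + 1)) • (gend * g (i + 1) + g i)
          = ((-1 : ℚ) ^ (i + 1)) • (gend * g (i + 1)) + ((-1 : ℚ) ^ (i + 1)) • g i :=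
      fun i _ => smul_add _ _ _
    rw [Finset.sum_congr rfl expand, Finset.sum_add_distrib, key2]
    have key3 : (∑ i ∈ Finset.range (n + 2), ((-1 : ℚ) ^ (i + 1)) • (gend * g (i + 1)))
        + ((-1 : ℚ) ^ 0) • (gend * g 0)
        = ∑ i ∈ Finset.range (n + 3), ((-1 : ℚ) ^ i) • (gend * g i) :=
      (Finset.sum_range_succ' (fun i => ((-1 : ℚ) ^ i) • (gend * g i)) (n + 2)).symm
    rw [add_right_comm, key3, key1, sub_mul, one_mul, sub_eq_add_neg]
  · intro i
    match i with
    | 0 =>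
      rcases hok 0 with h0 | ⟨k, hk, hNH⟩
      · rw [h0, mul_zero]; exact Ok_zero _ _
      · exact Or.inr ⟨2 + k, by omega, NH_mul NH_gend hNH⟩
    | (i + 1) =>
      refine Ok_add ?_ ?_
      · rcases hok (i + 1) with h0 | ⟨k, hk, hNH⟩
        · rw [h0, mul_zero]; exact Ok_zero _ _
        · exact Or.inr ⟨2 + k, by omega, NH_mul NH_gend hNH⟩
      · rcases hok i with h0 | ⟨k, hk, hNH⟩
        · rw [h0]; exact Ok_zero _ _
        · exact Or.inr ⟨k, by omega, hNH⟩
lemma GoodD_extract {n : ℕ} {x : FreeA} (h : GoodD n x) (M : FreeMonoid Bool) :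
    (toCoeffs x M ≠ 0 → M.length ≤ n ∧ M.length % 2 = n % 2) ∧
      ∀ i : ℕ, M.length + 2 * i = n → 0 ≤ (-1 : ℚ) ^ i * toCoeffs x M := by
  obtain ⟨g, hsum, hok⟩ := h
  have hco : toCoeffs x M
      = ∑ i ∈ Finset.range (n + 1), (-1 : ℚ) ^ i * toCoeffs (g i) M := by
    rw [hsum, toCoeffs_sum]
    exact Finset.sum_congr rfl fun i _ => toCoeffs_smul _ _ _
  constructor
  · intro hne
    rw [hco] at hne
    obtain ⟨i, -, hterm⟩ := Finset.exists_ne_zero_of_sum_ne_zero hne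
    have hg : toCoeffs (g i) M ≠ 0 := right_ne_zero_of_mul hterm
    rcases hok i with h0 | ⟨k, hk, hNH⟩
    · rw [h0] at hg; exact absurd (toCoeffs_zero M) hg
    · have hlen := hNH.2 M hg
      omega
  · intro i hi
    have hin : i ∈ Finset.range (n + 1) := Finset.mem_range.mpr (by omega)
    have key : ∀ i' ∈ Finset.range (n + 1), i' ≠ i →
        (-1 : ℚ) ^ i' * toCoeffs (g i') M = 0 := by
      intro i' _ hne
      rcases hok i' with h0 | ⟨k, hk, hNH⟩
      · rw [h0, toCoeffs_zero, mul_zero]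
      · by_cases hz : toCoeffs (g i') M = 0
        · rw [hz, mul_zero]
        · have := hNH.2 M hz
          omega
    rw [hco, Finset.sum_eq_single_of_mem i hin key, ← mul_assoc, ← pow_add]
    have hpow : (-1 : ℚ) ^ (i + i) = 1 := by
      rw [← two_mul, pow_mul]; norm_num
    rw [hpow, one_mul]
    rcases hok i with h0 | ⟨k, hk, hNH⟩
    · rw [h0, toCoeffs_zero]
    · exact hNH.1 M

lemma GoodD_Plist (hLeib : ∀ x y : FreeA, G' (x * y) = G' x * y + x * G' y)
    (ha : G' gena = gena * genb) (hb : G' genb = genb * gena) :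
    ∀ n : ℕ, ∀ P ∈ Plist G' n, GoodD n P := by
  intro n
  induction n using Nat.strong_induction_on with
  | _ n ih =>
    match n with
    | 0 =>
      intro P hP
      simp only [Plist, List.mem_singleton] at hP
      rw [hP]; exact GoodD_one
    | 1 =>
      intro P hP
      simp only [Plist, List.mem_singleton] at hP
      rw [hP]; exact GoodD_genc
    | (m + 2) =>
      intro P hP
      rw [Plist] at hP
      rcases List.mem_append.mp hP with h | h
      · obtain ⟨Q, hQ, rfl⟩ := List.mem_map.mp h
        exact GoodD_step1 G' hLeib ha hb (ih (m + 1) (by omega) Q hQ)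
      · obtain ⟨Q, hQ, rfl⟩ := List.mem_map.mp h
        exact GoodD_step2 (ih m (by omega) Q hQ)

end Gsec

theorem Plist_coeff_support_and_signs
    (G' : FreeA →ₗ[ℚ] FreeA)
    (hLeib : ∀ x y : FreeA, G' (x * y) = G' x * y + x * G' y)
    (ha : G' gena = gena * genb) (hb : G' genb = genb * gena)
    (n : ℕ) (j : Fin (Plist G' n).length) (M : FreeMonoid Bool) :
    (toCoeffs ((Plist G' n).get j) M ≠ 0 →
        M.length ≤ n ∧ M.length % 2 = n % 2) ∧
      ∀ i : ℕ, M.length + 2 * i = n →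
        0 ≤ (-1 : ℚ) ^ i * toCoeffs ((Plist G' n).get j) M := by
  exact GoodD_extract (GoodD_Plist G' hLeib ha hb n _ (List.get_mem _ j)) M
end
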